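/- Assume 0 < μν < λ²m² and set r = √(m²/(μν) − 1/λ²) > 0. For every θ ∈ ℝ and every t ∈ ℂ, the point z₁ = t, z₂ = −λtr e^{−iθ}, z₃ = −λtr e^{iθ} − (3σμ²r²/ν) e^{−2iθ}, z₄ = νr e^{iθ}, z₅ = μr e^{−iθ} satisfies ∂W/∂z₄(z) = ∂W/∂z₅(z) = 0 and V(z) = 2μνm² − μ²ν²/λ². Together with the lower bound V ≥ 2μνm² − μ²ν²/λ², this 3-real-parameter family consists of global minima of V, on which z₄ ≠ 0 and z₅ ≠ 0, so the R-symmetry is spontaneously broken everywhere on this pseudomoduli space. -/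

import Mathlib

open Complex Filter Topology

lemma cdfm_partial (lam mu nu m sig : ℂ) (w : Fin 5 → ℂ) (i : Fin 5) :
    fderiv ℂ (fun z : Fin 5 → ℂ => lam * z 0 * (z 3 * z 4 - m ^ 2) +
      mu * z 1 * z 3 + nu * z 2 * z 4 + sig * (z 4) ^ 3) w (Pi.single i 1) =
    ![lam * (w 3 * w 4 - m ^ 2), mu * w 3, nu * w 4,
      lam * w 0 * w 4 + mu * w 1,
      lam * w 0 * w 3 + nu * w 2 + 3 * sig * w 4 ^ 2] i := by
  have h0 : HasFDerivAt (fun z : Fin 5 → ℂ => z 0)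
      (ContinuousLinearMap.proj (R := ℂ) (φ := fun _ : Fin 5 => ℂ) 0) w :=
    (ContinuousLinearMap.proj (R := ℂ) (φ := fun _ : Fin 5 => ℂ) 0).hasFDerivAt
  have h1 : HasFDerivAt (fun z : Fin 5 → ℂ => z 1)
      (ContinuousLinearMap.proj (R := ℂ) (φ := fun _ : Fin 5 => ℂ) 1) w :=
    (ContinuousLinearMap.proj (R := ℂ) (φ := fun _ : Fin 5 => ℂ) 1).hasFDerivAt
  have h2 : HasFDerivAt (fun z : Fin 5 → ℂ => z 2)
      (ContinuousLinearMap.proj (R := ℂ) (φ := fun _ : Fin 5 => ℂ) 2) w :=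
    (ContinuousLinearMap.proj (R := ℂ) (φ := fun _ : Fin 5 => ℂ) 2).hasFDerivAt
  have h3 : HasFDerivAt (fun z : Fin 5 → ℂ => z 3)
      (ContinuousLinearMap.proj (R := ℂ) (φ := fun _ : Fin 5 => ℂ) 3) w :=
    (ContinuousLinearMap.proj (R := ℂ) (φ := fun _ : Fin 5 => ℂ) 3).hasFDerivAt
  have h4 : HasFDerivAt (fun z : Fin 5 → ℂ => z 4)
      (ContinuousLinearMap.proj (R := ℂ) (φ := fun _ : Fin 5 => ℂ) 4) w :=
    (ContinuousLinearMap.proj (R := ℂ) (φ := fun _ : Fin 5 => ℂ) 4).hasFDerivAt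
  have hA := ((h0.const_mul lam).mul ((h3.mul h4).sub_const (m ^ 2)))
  have hB := (h1.const_mul mu).mul h3
  have hC := (h2.const_mul nu).mul h4
  have hD := ((h4.mul h4).mul h4).const_mul sig
  have h := ((hA.add hB).add hC).add hD
  have heq : (fun z : Fin 5 → ℂ => lam * z 0 * (z 3 * z 4 - m ^ 2) +
      mu * z 1 * z 3 + nu * z 2 * z 4 + sig * (z 4) ^ 3) =
      (fun z : Fin 5 → ℂ => lam * z 0 * (z 3 * z 4 - m ^ 2) +
      mu * z 1 * z 3 + nu * z 2 * z 4 + sig * (z 4 * z 4 * z 4)) := by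
    funext z; ring
  rw [heq, HasFDerivAt.fderiv (f := fun z : Fin 5 → ℂ => lam * z 0 * (z 3 * z 4 - m ^ 2) +
      mu * z 1 * z 3 + nu * z 2 * z 4 + sig * (z 4 * z 4 * z 4)) h]
  fin_cases i <;>
    simp [ContinuousLinearMap.proj_apply, Pi.single_apply] <;> ring

set_option maxHeartbeats 1000000 in
theorem cdfm_vacuum_family
    (lam mu nu m sig : ℝ)
    (hlam : 0 < lam) (hmu : 0 < mu) (hnu : 0 < nu) (hm : 0 < m) (hsig : 0 < sig)
    (hcond : mu * nu < lam ^ 2 * m ^ 2)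
    (r : ℝ) (hr : r = Real.sqrt (m ^ 2 / (mu * nu) - 1 / lam ^ 2))
    (W : (Fin 5 → ℂ) → ℂ)
    (hW : ∀ z, W z = (lam : ℂ) * z 0 * (z 3 * z 4 - (m : ℂ) ^ 2) +
      (mu : ℂ) * z 1 * z 3 + (nu : ℂ) * z 2 * z 4 + (sig : ℂ) * (z 4) ^ 3)
    (V : (Fin 5 → ℂ) → ℝ)
    (hV : ∀ z, V z = ∑ i, ‖fderiv ℂ W z (Pi.single i 1)‖ ^ 2) :
    0 < r ∧
    ∀ (θ : ℝ) (t : ℂ),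
      let z : Fin 5 → ℂ :=
        ![t,
          -(lam : ℂ) * t * (r : ℂ) * Complex.exp (-(θ : ℂ) * Complex.I),
          -(lam : ℂ) * t * (r : ℂ) * Complex.exp ((θ : ℂ) * Complex.I) -
            ((3 * sig * mu ^ 2 * r ^ 2 / nu : ℝ) : ℂ) * Complex.exp (-2 * (θ : ℂ) * Complex.I),
          (nu : ℂ) * (r : ℂ) * Complex.exp ((θ : ℂ) * Complex.I),
          (mu : ℂ) * (r : ℂ) * Complex.exp (-(θ : ℂ) * Complex.I)]
      fderiv ℂ W z (Pi.single 3 1) = 0 ∧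
      fderiv ℂ W z (Pi.single 4 1) = 0 ∧
      V z = 2 * mu * nu * m ^ 2 - mu ^ 2 * nu ^ 2 / lam ^ 2 ∧
      (∀ w : Fin 5 → ℂ, V z ≤ V w) ∧
      z 3 ≠ 0 ∧ z 4 ≠ 0 := by
  have hWf : W = fun z : Fin 5 → ℂ => (lam : ℂ) * z 0 * (z 3 * z 4 - (m : ℂ) ^ 2) +
      (mu : ℂ) * z 1 * z 3 + (nu : ℂ) * z 2 * z 4 + (sig : ℂ) * (z 4) ^ 3 := funext hW
  subst hWf
  have hmn : 0 < mu * nu := mul_pos hmu hnu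
  have hlam2 : (0:ℝ) < lam ^ 2 := by positivity
  have hargpos : 0 < m ^ 2 / (mu * nu) - 1 / lam ^ 2 := by
    rw [sub_pos, div_lt_div_iff₀ hlam2 hmn]
    nlinarith
  have hrpos : 0 < r := by rw [hr]; exact Real.sqrt_pos.mpr hargpos
  have hr2 : r ^ 2 = m ^ 2 / (mu * nu) - 1 / lam ^ 2 := by
    rw [hr, Real.sq_sqrt hargpos.le]
  -- the global lower bound for V
  have hlow : ∀ w : Fin 5 → ℂ,
      2 * mu * nu * m ^ 2 - mu ^ 2 * nu ^ 2 / lam ^ 2 ≤ V w := by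
    intro w
    rw [hV, Fin.sum_univ_five]
    simp only [cdfm_partial]
    simp only [Matrix.cons_val_zero, Matrix.cons_val_one, Matrix.head_cons,
      Matrix.cons_val_two, Matrix.tail_cons, Matrix.cons_val_three, Matrix.cons_val_four]
    set a := w 3 with ha
    set b := w 4 with hb
    have t3 : (0:ℝ) ≤ ‖(lam : ℂ) * w 0 * b + (mu : ℂ) * w 1‖ ^ 2 := sq_nonneg _
    have t4 : (0:ℝ) ≤ ‖(lam : ℂ) * w 0 * a + (nu : ℂ) * w 2 + 3 * (sig : ℂ) * b ^ 2‖ ^ 2 :=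
      sq_nonneg _
    have h0 : ‖(lam : ℂ) * (a * b - (m : ℂ) ^ 2)‖ = lam * ‖a * b - (m : ℂ) ^ 2‖ := by
      rw [norm_mul, Complex.norm_real, Real.norm_of_nonneg hlam.le]
    have h1 : ‖(mu : ℂ) * a‖ = mu * ‖a‖ := by
      rw [norm_mul, Complex.norm_real, Real.norm_of_nonneg hmu.le]
    have h2 : ‖(nu : ℂ) * b‖ = nu * ‖b‖ := by
      rw [norm_mul, Complex.norm_real, Real.norm_of_nonneg hnu.le]
    rw [h0, h1, h2]
    set x := ‖a‖ with hx
    set y := ‖b‖ with hy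
    set d := ‖a * b - (m : ℂ) ^ 2‖ with hd
    have habs : |x * y - m ^ 2| ≤ d := by
      have h := abs_norm_sub_norm_le (a * b) ((m : ℂ) ^ 2)
      have hm2 : ‖((m : ℂ)) ^ 2‖ = m ^ 2 := by
        rw [norm_pow, Complex.norm_real, Real.norm_of_nonneg hm.le]
      rwa [norm_mul, hm2] at h
    have hd2 : (x * y - m ^ 2) ^ 2 ≤ d ^ 2 := by
      nlinarith [abs_nonneg (x * y - m ^ 2), _root_.sq_abs (x * y - m ^ 2)]
    have step1 : 2 * mu * nu * m ^ 2 - mu ^ 2 * nu ^ 2 / lam ^ 2 ≤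
        lam ^ 2 * (x * y - m ^ 2) ^ 2 + 2 * mu * nu * (x * y) := by
      have hdiv : lam ^ 2 * (mu ^ 2 * nu ^ 2 / lam ^ 2) = mu ^ 2 * nu ^ 2 := by
        field_simp
      have h5 : lam ^ 2 * (2 * mu * nu * m ^ 2 - mu ^ 2 * nu ^ 2 / lam ^ 2) ≤
          lam ^ 2 * (lam ^ 2 * (x * y - m ^ 2) ^ 2 + 2 * mu * nu * (x * y)) := by
        nlinarith [sq_nonneg (lam ^ 2 * (x * y - m ^ 2) + mu * nu), hdiv]
      exact le_of_mul_le_mul_left h5 hlam2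
    nlinarith [step1, mul_le_mul_of_nonneg_left hd2 hlam2.le, sq_nonneg (mu * x - nu * y),
      t3, t4]
  refine ⟨hrpos, ?_⟩
  intro θ t z
  have hz0 : z 0 = t := rfl
  have hz1 : z 1 = -(lam : ℂ) * t * (r : ℂ) * Complex.exp (-(θ : ℂ) * Complex.I) := rfl
  have hz2 : z 2 = -(lam : ℂ) * t * (r : ℂ) * Complex.exp ((θ : ℂ) * Complex.I) -
      ((3 * sig * mu ^ 2 * r ^ 2 / nu : ℝ) : ℂ) * Complex.exp (-2 * (θ : ℂ) * Complex.I) := rfl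
  have hz3 : z 3 = (nu : ℂ) * (r : ℂ) * Complex.exp ((θ : ℂ) * Complex.I) := rfl
  have hz4 : z 4 = (mu : ℂ) * (r : ℂ) * Complex.exp (-(θ : ℂ) * Complex.I) := rfl
  have hnu0 : (nu : ℂ) ≠ 0 := by exact_mod_cast hnu.ne'
  have hEE : Complex.exp ((θ : ℂ) * Complex.I) * Complex.exp (-(θ : ℂ) * Complex.I) = 1 := by
    rw [← Complex.exp_add]; ring_nf; exact Complex.exp_zero
  have h2exp : Complex.exp (-2 * (θ : ℂ) * Complex.I) =
      Complex.exp (-(θ : ℂ) * Complex.I) * Complex.exp (-(θ : ℂ) * Complex.I) := by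
    rw [← Complex.exp_add]; ring_nf
  have e3 : (lam : ℂ) * z 0 * z 4 + (mu : ℂ) * z 1 = 0 := by
    rw [hz0, hz1, hz4]; ring
  have e4 : (lam : ℂ) * z 0 * z 3 + (nu : ℂ) * z 2 + 3 * (sig : ℂ) * z 4 ^ 2 = 0 := by
    rw [hz0, hz2, hz3, hz4, h2exp]
    push_cast
    field_simp
    ring
  have hp3 : fderiv ℂ (fun z : Fin 5 → ℂ => (lam : ℂ) * z 0 * (z 3 * z 4 - (m : ℂ) ^ 2) +
      (mu : ℂ) * z 1 * z 3 + (nu : ℂ) * z 2 * z 4 + (sig : ℂ) * (z 4) ^ 3) z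
      (Pi.single 3 1) = 0 := by
    rw [cdfm_partial]
    simp only [Matrix.cons_val_three, Matrix.tail_cons, Matrix.head_cons]
    exact e3
  have hp4 : fderiv ℂ (fun z : Fin 5 → ℂ => (lam : ℂ) * z 0 * (z 3 * z 4 - (m : ℂ) ^ 2) +
      (mu : ℂ) * z 1 * z 3 + (nu : ℂ) * z 2 * z 4 + (sig : ℂ) * (z 4) ^ 3) z
      (Pi.single 4 1) = 0 := by
    rw [cdfm_partial]
    simp only [Matrix.cons_val_four, Matrix.tail_cons, Matrix.head_cons]
    exact e4
  have hVz : V z = 2 * mu * nu * m ^ 2 - mu ^ 2 * nu ^ 2 / lam ^ 2 := by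
    rw [hV, Fin.sum_univ_five]
    simp only [cdfm_partial]
    simp only [Matrix.cons_val_zero, Matrix.cons_val_one, Matrix.head_cons,
      Matrix.cons_val_two, Matrix.tail_cons, Matrix.cons_val_three, Matrix.cons_val_four]
    rw [e3, e4]
    have e0 : (lam : ℂ) * (z 3 * z 4 - (m : ℂ) ^ 2) =
        ((lam * (mu * nu * r ^ 2 - m ^ 2) : ℝ) : ℂ) := by
      rw [hz3, hz4]
      push_cast
      rw [show (nu : ℂ) * r * Complex.exp ((θ : ℂ) * Complex.I) *
          ((mu : ℂ) * r * Complex.exp (-(θ : ℂ) * Complex.I)) =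
          (mu : ℂ) * nu * r ^ 2 * (Complex.exp ((θ : ℂ) * Complex.I) *
            Complex.exp (-(θ : ℂ) * Complex.I)) by ring, hEE]
      ring
    have e1 : (mu : ℂ) * z 3 = ((mu * nu * r : ℝ) : ℂ) * Complex.exp ((θ : ℂ) * Complex.I) := by
      rw [hz3]; push_cast; ring
    have e2 : (nu : ℂ) * z 4 = ((mu * nu * r : ℝ) : ℂ) * Complex.exp (-(θ : ℂ) * Complex.I) := by
      rw [hz4]; push_cast; ring
    rw [e0, e1, e2]
    have nE1 : ‖Complex.exp ((θ : ℂ) * Complex.I)‖ = 1 := by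
      rw [Complex.norm_exp]; simp
    have nE2 : ‖Complex.exp (-(θ : ℂ) * Complex.I)‖ = 1 := by
      rw [Complex.norm_exp]; simp
    rw [norm_mul, norm_mul, nE1, nE2]
    simp only [Complex.norm_real, Real.norm_eq_abs, norm_zero, mul_one, sq_abs]
    have hnum : (lam * (mu * nu * r ^ 2 - m ^ 2)) ^ 2 + (mu * nu * r) ^ 2 + (mu * nu * r) ^ 2 =
        2 * mu * nu * m ^ 2 - mu ^ 2 * nu ^ 2 / lam ^ 2 := by
      have hs : mu * nu * r ^ 2 = m ^ 2 - mu * nu / lam ^ 2 := by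
        rw [hr2]; field_simp
      have h2' : (mu * nu * r) ^ 2 = mu * nu * (mu * nu * r ^ 2) := by ring
      rw [h2', hs]
      field_simp
      ring
    linarith [hnum, _root_.sq_abs (lam * (mu * nu * r ^ 2 - m ^ 2)), _root_.sq_abs (mu * nu * r)]
  refine ⟨hp3, hp4, hVz, fun w => hVz ▸ hlow w, ?_, ?_⟩
  · rw [hz3]
    exact mul_ne_zero (mul_ne_zero hnu0 (by exact_mod_cast hrpos.ne'))
      (Complex.exp_ne_zero _)
  · rw [hz4]
    exact mul_ne_zero (mul_ne_zero (by exact_mod_cast hmu.ne' : (mu:ℂ) ≠ 0)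
      (by exact_mod_cast hrpos.ne')) (Complex.exp_ne_zero _)
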